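/- Let f be a continuous function on [0,1] and n a natural number. If p₁ and p₂ are both best mean approximations to f among polynomials of degree at most n (with respect to the L¹-norm ‖g‖₁ = ∫₀¹|g| dx), then p₁ = p₂. -/

import Mathlib

open Set MeasureTheory intervalIntegral Filter

lemma aux_sign {a b c : ℝ} (h1 : 0 < a * b) (h2 : 0 < a * c) : 0 < b * c := by
  rcases lt_trichotomy a 0 with h | h | h
  · have hb : b < 0 := by nlinarith
    have hc : c < 0 := by nlinarith
    exact mul_pos_of_neg_of_neg hb hc
  · simp [h] at h1
  · have hb : 0 < b := by nlinarith
    have hc : 0 < c := by nlinarith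
    exact mul_pos hb hc

lemma aux_sign_neg {a b c : ℝ} (h1 : 0 < a * b) (h2 : a * c < 0) : b * c < 0 := by
  rcases lt_trichotomy a 0 with h | h | h
  · have hb : b < 0 := by nlinarith
    have hc : 0 < c := by nlinarith
    exact mul_neg_of_neg_of_pos hb hc
  · simp [h] at h1
  · have hb : 0 < b := by nlinarith
    have hc : c < 0 := by nlinarith
    exact mul_neg_of_pos_of_neg hb hc

lemma lem_sign_const {g : ℝ → ℝ} {A B u v : ℝ} (hg : ContinuousOn g (Set.Icc A B))
    (hu : u ∈ Set.Icc A B) (hv : v ∈ Set.Icc A B)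
    (hne : ∀ x ∈ Set.uIcc u v, g x ≠ 0) : 0 < g u * g v := by
  have core : ∀ u v : ℝ, u ∈ Set.Icc A B → v ∈ Set.Icc A B → u ≤ v →
      (∀ x ∈ Set.uIcc u v, g x ≠ 0) → 0 < g u * g v := by
    intro u v hu hv huv hne
    have huIcc : Set.uIcc u v = Set.Icc u v := Set.uIcc_of_le huv
    have hcont : ContinuousOn g (Set.Icc u v) := hg.mono (Set.Icc_subset_Icc hu.1 hv.2)
    have hgu : g u ≠ 0 := hne u (by rw [huIcc]; exact Set.left_mem_Icc.2 huv)
    have hgv : g v ≠ 0 := hne v (by rw [huIcc]; exact Set.right_mem_Icc.2 huv)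
    by_contra hle
    push_neg at hle
    have hlt : g u * g v < 0 := lt_of_le_of_ne hle (mul_ne_zero hgu hgv)
    rcases mul_neg_iff.1 hlt with ⟨h1, h2⟩ | ⟨h1, h2⟩
    · -- g v < 0 < g u
      have : (0:ℝ) ∈ Set.Icc (g v) (g u) := ⟨h2.le, h1.le⟩
      obtain ⟨c, hc, hc0⟩ := intermediate_value_Icc' huv hcont this
      exact hne c (by rwa [huIcc]) hc0
    · have : (0:ℝ) ∈ Set.Icc (g u) (g v) := ⟨h1.le, h2.le⟩
      obtain ⟨c, hc, hc0⟩ := intermediate_value_Icc huv hcont this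
      exact hne c (by rwa [huIcc]) hc0
  rcases le_total u v with h | h
  · exact core u v hu hv h hne
  · have := core v u hv hu h (by rwa [Set.uIcc_comm])
    linarith [this, mul_comm (g v) (g u)]

lemma L0 {h : ℝ → ℝ} (hc : ContinuousOn h (Set.Icc 0 1))
    (hnn : ∀ x ∈ Set.Icc (0:ℝ) 1, 0 ≤ h x)
    (hint : (∫ x in (0:ℝ)..1, h x) = 0) :
    ∀ x ∈ Set.Icc (0:ℝ) 1, h x = 0 := by
  have hii : ∀ a b : ℝ, a ∈ Set.Icc (0:ℝ) 1 → b ∈ Set.Icc (0:ℝ) 1 →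
      IntervalIntegrable h volume a b := by
    intro a b ha hb
    apply ContinuousOn.intervalIntegrable
    apply hc.mono
    rw [show Set.Icc (0:ℝ) 1 = Set.uIcc (0:ℝ) 1 from (Set.uIcc_of_le zero_le_one).symm]
    exact Set.uIcc_subset_uIcc (by rwa [Set.uIcc_of_le zero_le_one]) (by rwa [Set.uIcc_of_le zero_le_one])
  by_contra hcon
  push_neg at hcon
  obtain ⟨x₀, hx₀, hx₀ne⟩ := hcon
  have hx₀pos : 0 < h x₀ := lt_of_le_of_ne (hnn x₀ hx₀) (Ne.symm hx₀ne)
  have hcw : ContinuousWithinAt h (Set.Icc 0 1) x₀ := hc x₀ hx₀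
  have hnb : {y | h x₀ / 2 < h y} ∈ nhdsWithin x₀ (Set.Icc 0 1) :=
    hcw (Ioi_mem_nhds (by linarith))
  rw [Metric.mem_nhdsWithin_iff] at hnb
  obtain ⟨δ, hδ, hball⟩ := hnb
  set u := max 0 (x₀ - δ/2) with hu
  set v := min 1 (x₀ + δ/2) with hv
  have hx₀mem : x₀ ∈ Set.Icc (0:ℝ) 1 := hx₀
  have huv : u < v := by
    apply max_lt <;> apply lt_min
    · norm_num
    · linarith [hx₀mem.1]
    · linarith [hx₀mem.2]
    · linarith
  have humem : u ∈ Set.Icc (0:ℝ) 1 := by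
    constructor
    · exact le_max_left _ _
    · apply max_le zero_le_one; linarith [hx₀mem.2]
  have hvmem : v ∈ Set.Icc (0:ℝ) 1 := by
    constructor
    · apply le_min zero_le_one; linarith [hx₀mem.1]
    · exact min_le_left _ _
  have hsub : ∀ y ∈ Set.Icc u v, h x₀ / 2 < h y := by
    intro y hy
    apply hball
    constructor
    · rw [Metric.mem_ball, Real.dist_eq, abs_sub_lt_iff]
      constructor
      · have h1 : y ≤ x₀ + δ/2 := le_trans hy.2 (min_le_right _ _)
        linarith
      · have h2 : x₀ - δ/2 ≤ y := le_trans (le_max_right _ _) hy.1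
        linarith
    · exact ⟨le_trans humem.1 hy.1, le_trans hy.2 hvmem.2⟩
  have hmid : (v - u) * (h x₀ / 2) ≤ ∫ x in u..v, h x := by
    have hm := intervalIntegral.integral_mono_on (μ := volume)
      (f := fun _ => h x₀ / 2) (g := h) huv.le
      intervalIntegrable_const (hii u v humem hvmem)
      (fun y hy => (hsub y hy).le)
    simpa [intervalIntegral.integral_const, smul_eq_mul, mul_div_assoc] using hm
  have h1 : (∫ x in (0:ℝ)..u, h x) + (∫ x in u..v, h x) = ∫ x in (0:ℝ)..v, h x :=
    intervalIntegral.integral_add_adjacent_intervals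
      (hii 0 u (Set.left_mem_Icc.2 zero_le_one) humem) (hii u v humem hvmem)
  have h2 : (∫ x in (0:ℝ)..v, h x) + (∫ x in v..1, h x) = ∫ x in (0:ℝ)..1, h x :=
    intervalIntegral.integral_add_adjacent_intervals
      (hii 0 v (Set.left_mem_Icc.2 zero_le_one) hvmem)
      (hii v 1 hvmem (Set.right_mem_Icc.2 zero_le_one))
  have hnn1 : 0 ≤ ∫ x in (0:ℝ)..u, h x := by
    apply intervalIntegral.integral_nonneg humem.1
    intro x hx
    exact hnn x ⟨hx.1, le_trans hx.2 humem.2⟩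
  have hnn2 : 0 ≤ ∫ x in v..(1:ℝ), h x := by
    apply intervalIntegral.integral_nonneg hvmem.2
    intro x hx
    exact hnn x ⟨le_trans hvmem.1 hx.1, hx.2⟩
  have : 0 < (v - u) * (h x₀ / 2) := by
    apply mul_pos (by linarith) (by linarith)
  linarith [h1, h2, hmid, hnn1, hnn2, hint]


lemma lem_const {a b : ℝ} {g : ℝ → ℝ} (hab : a < b)
    (hgc : ContinuousOn g (Set.Icc a b)) (hnz : ∀ x ∈ Set.Ioo a b, g x ≠ 0) :
    ∃ q : Polynomial ℝ, q.natDegree = 0 ∧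
      (∀ x ∈ Set.Ioo a b, g x ≠ 0 → 0 < g x * q.eval x) ∧
      (∀ x : ℝ, b ≤ x → ∀ y ∈ Set.Ioo a b, (∀ u ∈ Set.Ioo y b, g u ≠ 0) → g y ≠ 0 →
        0 < g y * q.eval x) := by
  set x₀ := (a + b) / 2 with hx₀def
  have hx₀ : x₀ ∈ Set.Ioo a b := by
    constructor <;> (simp only [hx₀def]; linarith)
  have hgx₀ : g x₀ ≠ 0 := hnz x₀ hx₀
  set ε : ℝ := if 0 < g x₀ then 1 else -1 with hε
  have key : ∀ y ∈ Set.Ioo a b, g y ≠ 0 → 0 < g y * ε := by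
    intro y hy hgy
    have hprod : 0 < g y * g x₀ := by
      apply lem_sign_const hgc (Set.mem_Icc_of_Ioo hy) (Set.mem_Icc_of_Ioo hx₀)
      intro u hu
      exact hnz u (Set.ordConnected_Ioo.uIcc_subset hy hx₀ hu)
    rcases lt_or_ge 0 (g x₀) with h | h
    · rw [hε, if_pos h]; nlinarith
    · have hlt : g x₀ < 0 := lt_of_le_of_ne h hgx₀
      rw [hε, if_neg (not_lt.2 h)]; nlinarith
  refine ⟨Polynomial.C ε, by simp, ?_, ?_⟩
  · intro x hx hgx
    simpa using key x hx hgx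
  · intro x hbx y hy hfree hgy
    simpa using key y hy hgy

open Polynomial in
lemma lem_signpoly (N : ℕ) : ∀ (T : Finset ℝ) (a b : ℝ) (g : ℝ → ℝ),
    T.card ≤ N → a < b → ContinuousOn g (Set.Icc a b) →
    (∀ x ∈ T, x ∈ Set.Ioo a b → g x = 0) →
    (∀ x ∈ Set.Ioo a b, g x = 0 → x ∈ T) →
    ∃ q : Polynomial ℝ, q.natDegree ≤ T.card ∧
      (∀ x ∈ Set.Ioo a b, g x ≠ 0 → 0 < g x * q.eval x) ∧
      (∀ x : ℝ, b ≤ x → ∀ y ∈ Set.Ioo a b, (∀ u ∈ Set.Ioo y b, g u ≠ 0) → g y ≠ 0 →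
        0 < g y * q.eval x) := by
  classical
  induction N with
  | zero =>
    intro T a b g hcard hab hgc hT0 hzeros
    have hT : T = ∅ := Finset.card_eq_zero.1 (le_antisymm hcard (Nat.zero_le _))
    subst hT
    have hnz : ∀ x ∈ Set.Ioo a b, g x ≠ 0 := by
      intro x hx h0
      simpa using hzeros x hx h0
    obtain ⟨q, hq0, h1, h2⟩ := lem_const hab hgc hnz
    exact ⟨q, by omega, h1, h2⟩
  | succ N ih =>
    intro T a b g hcard hab hgc hT0 hzeros
    set F := T.filter (fun x => x ∈ Set.Ioo a b) with hF
    by_cases hFne : F.Nonempty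
    · -- main inductive case
      set z := F.max' hFne with hzdef
      have hzF : z ∈ F := F.max'_mem hFne
      have hzT : z ∈ T := (Finset.mem_filter.1 hzF).1
      have hzIoo : z ∈ Set.Ioo a b := by
        have := (Finset.mem_filter.1 hzF).2
        simpa using this
      have hgz : g z = 0 := hT0 z hzT hzIoo
      have hmax : ∀ u ∈ T, u ∈ Set.Ioo a b → u ≤ z := fun u hu hu2 =>
        F.le_max' u (Finset.mem_filter.2 ⟨hu, by simpa using hu2⟩)
      have hcardz : T.card = (T.erase z).card + 1 := by
        rw [Finset.card_erase_of_mem hzT]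
        have : 0 < T.card := Finset.card_pos.2 ⟨z, hzT⟩
        omega
      have hcard' : (T.erase z).card ≤ N := by omega
      obtain ⟨q₁, hdeg₁, h2', h3'⟩ := ih (T.erase z) a z g hcard' hzIoo.1
        (hgc.mono (Set.Icc_subset_Icc_right hzIoo.2.le))
        (fun x hx hx2 => hT0 x (Finset.mem_of_mem_erase hx)
          (Set.Ioo_subset_Ioo_right hzIoo.2.le hx2))
        (fun x hx h0 => Finset.mem_erase.2 ⟨ne_of_lt hx.2,
          hzeros x (Set.Ioo_subset_Ioo_right hzIoo.2.le hx) h0⟩)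
      set F' := (T.erase z).filter (fun x => x ∈ Set.Ioo a z) with hF'
      set w : ℝ := if hne : F'.Nonempty then F'.max' hne else a with hw
      have hwmem : a ≤ w ∧ w < z := by
        rw [hw]
        split_ifs with h
        · have := F'.max'_mem h
          have hm : F'.max' h ∈ Set.Ioo a z := by
            have := (Finset.mem_filter.1 this).2
            simpa using this
          exact ⟨hm.1.le, hm.2⟩
        · exact ⟨le_refl a, hzIoo.1⟩
      have hwmax : ∀ u ∈ F', u ≤ w := by
        intro u hu
        rw [hw]
        split_ifs with h
        · exact F'.le_max' u hu
        · exact absurd ⟨u, hu⟩ h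
      set y₁ := (w + z) / 2 with hy₁def
      have hwy₁ : w < y₁ := by rw [hy₁def]; linarith [hwmem.2]
      have hy₁Ioo : y₁ ∈ Set.Ioo a z := by
        constructor <;> (rw [hy₁def]; linarith [hwmem.1, hwmem.2, hzIoo.1])
      have hy₁Ioob : y₁ ∈ Set.Ioo a b := ⟨hy₁Ioo.1, hy₁Ioo.2.trans hzIoo.2⟩
      have hmemF' : ∀ u : ℝ, u ∈ Set.Ioo a z → g u = 0 → u ∈ F' := by
        intro u hu h0
        refine Finset.mem_filter.2 ⟨?_, by simpa using hu⟩
        exact Finset.mem_erase.2 ⟨ne_of_lt hu.2,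
          hzeros u (Set.Ioo_subset_Ioo_right hzIoo.2.le hu) h0⟩
      have hfreeL : ∀ u ∈ Set.Ioo y₁ z, g u ≠ 0 := by
        intro u hu h0
        have huIoo : u ∈ Set.Ioo a z := ⟨hy₁Ioo.1.trans hu.1, hu.2⟩
        have := hwmax u (hmemF' u huIoo h0)
        linarith [hu.1, hwy₁]
      have hgy₁ : g y₁ ≠ 0 := by
        intro h0
        have := hwmax y₁ (hmemF' y₁ hy₁Ioo h0)
        linarith
      set x₁ := (z + b) / 2 with hx₁def
      have hx₁Ioo : x₁ ∈ Set.Ioo z b := by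
        constructor <;> (rw [hx₁def]; linarith [hzIoo.2])
      have hx₁Ioob : x₁ ∈ Set.Ioo a b := ⟨hzIoo.1.trans hx₁Ioo.1, hx₁Ioo.2⟩
      have hfreeR : ∀ u ∈ Set.Ioo z b, g u ≠ 0 := by
        intro u hu h0
        have huT : u ∈ T := hzeros u ⟨hzIoo.1.trans hu.1, hu.2⟩ h0
        have := hmax u huT ⟨hzIoo.1.trans hu.1, hu.2⟩
        linarith [hu.1]
      have hgx₁ : g x₁ ≠ 0 := hfreeR x₁ hx₁Ioo
      have hsignR : ∀ x ∈ Set.Ioo z b, 0 < g x * g x₁ := by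
        intro x hx
        apply lem_sign_const hgc
          (Set.mem_Icc_of_Ioo ⟨hzIoo.1.trans hx.1, hx.2⟩) (Set.mem_Icc_of_Ioo hx₁Ioob)
        intro u hu
        exact hfreeR u (Set.ordConnected_Ioo.uIcc_subset hx hx₁Ioo hu)
      have hq₁x : ∀ x : ℝ, z ≤ x → 0 < g y₁ * q₁.eval x := fun x hx =>
        h3' x hx y₁ hy₁Ioo hfreeL hgy₁
      have hyright : ∀ y ∈ Set.Ioo a b, (∀ u ∈ Set.Ioo y b, g u ≠ 0) → g y ≠ 0 →
          y ∈ Set.Ioo z b := by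
        intro y hy hfree hgy
        rcases lt_trichotomy y z with h | h | h
        · exact absurd hgz (hfree z ⟨h, hzIoo.2⟩)
        · exact absurd (h ▸ hgy) (fun hh => hh hgz)
        · exact ⟨h, hy.2⟩
      have hne0 : g y₁ * g x₁ ≠ 0 := mul_ne_zero hgy₁ hgx₁
      rcases lt_or_gt_of_ne hne0 with hopp | hsame
      · -- sign change at z
        refine ⟨q₁ * (Polynomial.C (-1) * (Polynomial.X - Polynomial.C z)), ?_, ?_, ?_⟩
        · have h1 : (Polynomial.C (-1:ℝ) * (Polynomial.X - Polynomial.C z)).natDegree ≤ 1 := by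
            apply le_trans (Polynomial.natDegree_mul_le)
            simp [Polynomial.natDegree_X_sub_C]
          calc (q₁ * (Polynomial.C (-1) * (Polynomial.X - Polynomial.C z))).natDegree
              ≤ _ := Polynomial.natDegree_mul_le
            _ ≤ T.card := by omega
        · intro x hx hgx
          have heval : (q₁ * (Polynomial.C (-1) * (Polynomial.X - Polynomial.C z))).eval x
              = q₁.eval x * (z - x) := by
            simp only [Polynomial.eval_mul, Polynomial.eval_C, Polynomial.eval_sub, Polynomial.eval_X]; ring
          rw [heval]
          rcases lt_trichotomy x z with h | h | h
          · have := h2' x ⟨hx.1, h⟩ hgx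
            nlinarith
          · exact absurd (h ▸ hgx) (fun hh => hh hgz)
          · have hgxx₁ : 0 < g x * g x₁ := hsignR x ⟨h, hx.2⟩
            have hq := hq₁x x h.le
            have hx₁q : g x₁ * q₁.eval x < 0 := by
              have := aux_sign_neg hq (by linarith [mul_comm (g y₁) (g x₁)] : g y₁ * g x₁ < 0)
              linarith [mul_comm (q₁.eval x) (g x₁)]
            have hgxq : g x * q₁.eval x < 0 := by
              have h1 : 0 < g x₁ * g x := by linarith [mul_comm (g x) (g x₁)]
              have := aux_sign_neg h1 hx₁q
              linarith [mul_comm (g x) (q₁.eval x)]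
            nlinarith
        · intro x hbx y hy hfree hgy
          have hyz : y ∈ Set.Ioo z b := hyright y hy hfree hgy
          have heval : (q₁ * (Polynomial.C (-1) * (Polynomial.X - Polynomial.C z))).eval x
              = q₁.eval x * (z - x) := by
            simp only [Polynomial.eval_mul, Polynomial.eval_C, Polynomial.eval_sub, Polynomial.eval_X]; ring
          rw [heval]
          have hgyx₁ : 0 < g y * g x₁ := hsignR y hyz
          have hq := hq₁x x (hzIoo.2.le.trans hbx)
          have hx₁q : g x₁ * q₁.eval x < 0 := by
            have := aux_sign_neg hq (by linarith [mul_comm (g y₁) (g x₁)] : g y₁ * g x₁ < 0)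
            linarith [mul_comm (q₁.eval x) (g x₁)]
          have hgyq : g y * q₁.eval x < 0 := by
            have h1 : 0 < g x₁ * g y := by linarith [mul_comm (g y) (g x₁)]
            have := aux_sign_neg h1 hx₁q
            linarith [mul_comm (g y) (q₁.eval x)]
          have hzx : z < x := lt_of_lt_of_le hzIoo.2 hbx
          nlinarith
      · -- no sign change at z
        refine ⟨q₁, hdeg₁.trans (Finset.card_le_card (Finset.erase_subset _ _)), ?_, ?_⟩
        · intro x hx hgx
          rcases lt_trichotomy x z with h | h | h
          · exact h2' x ⟨hx.1, h⟩ hgx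
          · exact absurd (h ▸ hgx) (fun hh => hh hgz)
          · have hgxx₁ : 0 < g x * g x₁ := hsignR x ⟨h, hx.2⟩
            have hq := hq₁x x h.le
            have hx₁q : 0 < g x₁ * q₁.eval x := aux_sign hsame hq
            have h1 : 0 < g x₁ * g x := by linarith [mul_comm (g x) (g x₁)]
            exact aux_sign h1 hx₁q
        · intro x hbx y hy hfree hgy
          have hyz : y ∈ Set.Ioo z b := hyright y hy hfree hgy
          have hgyx₁ : 0 < g y * g x₁ := hsignR y hyz
          have hq := hq₁x x (hzIoo.2.le.trans hbx)
          have hx₁q : 0 < g x₁ * q₁.eval x := aux_sign hsame hq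
          have h1 : 0 < g x₁ * g y := by linarith [mul_comm (g y) (g x₁)]
          exact aux_sign h1 hx₁q
    · -- no zeros in Ioo a b
      have hnz : ∀ x ∈ Set.Ioo a b, g x ≠ 0 := by
        intro x hx h0
        exact hFne ⟨x, Finset.mem_filter.2 ⟨hzeros x hx h0, by simpa using hx⟩⟩
      obtain ⟨q, hq0, h1, h2⟩ := lem_const hab hgc hnz
      exact ⟨q, by omega, h1, h2⟩
set_option maxHeartbeats 2000000 in
theorem stmt_3 (f : ℝ → ℝ) (n : ℕ) (hf : ContinuousOn f (Set.Icc 0 1))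
    (p₁ p₂ : Polynomial ℝ) (hp₁ : p₁.natDegree ≤ n) (hp₂ : p₂.natDegree ≤ n)
    (hbest₁ : ∀ q : Polynomial ℝ, q.natDegree ≤ n →
      (∫ x in (0:ℝ)..1, |f x - p₁.eval x|) ≤ ∫ x in (0:ℝ)..1, |f x - q.eval x|)
    (hbest₂ : ∀ q : Polynomial ℝ, q.natDegree ≤ n →
      (∫ x in (0:ℝ)..1, |f x - p₂.eval x|) ≤ ∫ x in (0:ℝ)..1, |f x - q.eval x|) :
    p₁ = p₂ := by
  by_contra hne
  have hrne : p₁ - p₂ ≠ 0 := sub_ne_zero.mpr hne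
  have hrdeg : (p₁ - p₂).natDegree ≤ n :=
    le_trans (Polynomial.natDegree_sub_le _ _) (max_le hp₁ hp₂)
  set m : Polynomial ℝ := Polynomial.C (2⁻¹ : ℝ) * (p₁ + p₂) with hm
  have hmdeg : m.natDegree ≤ n :=
    le_trans (Polynomial.natDegree_C_mul_le _ _)
      (le_trans (Polynomial.natDegree_add_le _ _) (max_le hp₁ hp₂))
  set g : ℝ → ℝ := fun x => f x - m.eval x with hg
  set A : ℝ → ℝ := fun x => f x - p₁.eval x with hA
  set B : ℝ → ℝ := fun x => f x - p₂.eval x with hB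
  have hkey : ∀ x, A x + B x = 2 * g x := by
    intro x
    simp only [hA, hB, hg, hm, Polynomial.eval_mul, Polynomial.eval_C, Polynomial.eval_add]
    ring
  have hgc : ContinuousOn g (Set.Icc 0 1) := hf.sub (Polynomial.continuous m).continuousOn
  have hAc : ContinuousOn A (Set.Icc 0 1) := hf.sub (Polynomial.continuous p₁).continuousOn
  have hBc : ContinuousOn B (Set.Icc 0 1) := hf.sub (Polynomial.continuous p₂).continuousOn
  have hIcc : Set.uIcc (0:ℝ) 1 = Set.Icc 0 1 := Set.uIcc_of_le zero_le_one
  have hii : ∀ q : Polynomial ℝ,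
      IntervalIntegrable (fun x => |f x - q.eval x|) volume 0 1 := by
    intro q
    apply ContinuousOn.intervalIntegrable
    rw [hIcc]
    exact (hf.sub (Polynomial.continuous q).continuousOn).abs
  set E := ∫ x in (0:ℝ)..1, |A x| with hE
  have hEB : (∫ x in (0:ℝ)..1, |B x|) = E := by
    rw [hE]; simp only [hA, hB]
    exact le_antisymm (hbest₂ p₁ hp₁) (hbest₁ p₂ hp₂)
  have hgival : ∀ (s : ℝ) (q : Polynomial ℝ), (∫ x in (0:ℝ)..1, |g x - s * q.eval x|)
      = ∫ x in (0:ℝ)..1, |f x - (m + Polynomial.C s * q).eval x| := by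
    intro s q
    apply intervalIntegral.integral_congr
    intro x _
    simp only [hg, Polynomial.eval_add, Polynomial.eval_mul, Polynomial.eval_C]
    congr 1
    ring
  have hdegsum : ∀ (s : ℝ) (q : Polynomial ℝ), q.natDegree ≤ n →
      (m + Polynomial.C s * q).natDegree ≤ n := by
    intro s q hq
    exact le_trans (Polynomial.natDegree_add_le _ _)
      (max_le hmdeg (le_trans (Polynomial.natDegree_C_mul_le _ _) hq))
  have hglb : ∀ (s : ℝ) (q : Polynomial ℝ), q.natDegree ≤ n →
      E ≤ ∫ x in (0:ℝ)..1, |g x - s * q.eval x| := by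
    intro s q hq
    rw [hgival, hE]
    simp only [hA]
    exact hbest₁ _ (hdegsum s q hq)
  have hgii : ∀ (s : ℝ) (q : Polynomial ℝ),
      IntervalIntegrable (fun x => |g x - s * q.eval x|) volume 0 1 := by
    intro s q
    apply ContinuousOn.intervalIntegrable
    rw [hIcc]
    exact (hgc.sub ((continuous_const.mul (Polynomial.continuous q)).continuousOn)).abs
  have hgE0 : E ≤ ∫ x in (0:ℝ)..1, |g x| := by
    have := hglb 0 0 (by simp)
    simpa using this
  have habs : ∀ x, 0 ≤ |A x| + |B x| - 2 * |g x| := by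
    intro x
    have h1 : |A x + B x| ≤ |A x| + |B x| := abs_add_le _ _
    rw [hkey x, abs_mul] at h1
    rw [show |(2:ℝ)| = 2 by norm_num] at h1
    linarith
  have hiA : IntervalIntegrable (fun x => |A x|) volume 0 1 := by
    simp only [hA]; exact hii p₁
  have hiB : IntervalIntegrable (fun x => |B x|) volume 0 1 := by
    simp only [hB]; exact hii p₂
  have hig : IntervalIntegrable (fun x => |g x|) volume 0 1 := by
    simp only [hg]; exact hii m
  have hphi_int : (∫ x in (0:ℝ)..1, (|A x| + |B x| - 2 * |g x|))
      = E + E - 2 * ∫ x in (0:ℝ)..1, |g x| := by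
    rw [intervalIntegral.integral_sub (hiA.add hiB) (hig.const_mul 2),
      intervalIntegral.integral_add hiA hiB, intervalIntegral.integral_const_mul, hEB]
  have hphi_nn : 0 ≤ ∫ x in (0:ℝ)..1, (|A x| + |B x| - 2 * |g x|) :=
    intervalIntegral.integral_nonneg zero_le_one (fun x _ => habs x)
  have hphi0 : (∫ x in (0:ℝ)..1, (|A x| + |B x| - 2 * |g x|)) = 0 := by
    rw [hphi_int]; rw [hphi_int] at hphi_nn; linarith
  have hgE : (∫ x in (0:ℝ)..1, |g x|) = E := by
    rw [hphi_int] at hphi0; linarith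
  have hphieq : ∀ x ∈ Set.Icc (0:ℝ) 1, |A x| + |B x| - 2 * |g x| = 0 :=
    L0 ((hAc.abs.add hBc.abs).sub (continuousOn_const.mul hgc.abs))
      (fun x _ => habs x) hphi0
  have hzero_r : ∀ x ∈ Set.Icc (0:ℝ) 1, g x = 0 → (p₁ - p₂).eval x = 0 := by
    intro x hx h0
    have h1 := hphieq x hx
    have h2 : |g x| = 0 := by rw [h0, abs_zero]
    have hA0 : A x = 0 := by
      rw [abs_eq_zero.symm]
      nlinarith [abs_nonneg (A x), abs_nonneg (B x)]
    have hB0 : B x = 0 := by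
      rw [abs_eq_zero.symm]
      nlinarith [abs_nonneg (A x), abs_nonneg (B x)]
    have hA' : p₁.eval x = f x := by simp only [hA] at hA0; linarith
    have hB' : p₂.eval x = f x := by simp only [hB] at hB0; linarith
    rw [Polynomial.eval_sub, hA', hB', sub_self]
  set S₀ : Set ℝ := {x : ℝ | x ∈ Set.Icc (0:ℝ) 1 ∧ g x = 0} with hS₀
  have hS₀sub : S₀ ⊆ ↑(p₁ - p₂).roots.toFinset := by
    intro x hx
    simp only [Finset.coe_sort_coe, Multiset.mem_toFinset, Finset.mem_coe]
    rw [Polynomial.mem_roots']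
    exact ⟨hrne, hzero_r x hx.1 hx.2⟩
  have hS₀fin : S₀.Finite :=
    Set.Finite.subset ((p₁ - p₂).roots.toFinset.finite_toSet) hS₀sub
  set T := hS₀fin.toFinset with hT
  have hTcard : T.card ≤ n := by
    have hsub : T ⊆ (p₁ - p₂).roots.toFinset := by
      intro x hx
      have : x ∈ S₀ := hS₀fin.mem_toFinset.1 hx
      exact_mod_cast hS₀sub this
    calc T.card ≤ (p₁ - p₂).roots.toFinset.card := Finset.card_le_card hsub
      _ ≤ Multiset.card (p₁ - p₂).roots := Multiset.toFinset_card_le _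
      _ ≤ (p₁ - p₂).natDegree := Polynomial.card_roots' _
      _ ≤ n := hrdeg
  have hvolS₀ : volume S₀ = 0 := hS₀fin.measure_zero _
  -- orthogonality
  have hort : ∀ q : Polynomial ℝ, q.natDegree ≤ n →
      (∫ x in Set.Ioc (0:ℝ) 1, Real.sign (g x) * q.eval x) ≤ 0 := by
    intro q hq
    set μ := volume.restrict (Set.Ioc (0:ℝ) 1) with hμ
    have h01 : ∀ h : ℝ → ℝ, (∫ x in (0:ℝ)..1, h x) = ∫ x, h x ∂μ := fun h =>
      intervalIntegral.integral_of_le zero_le_one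
    have hInt : ∀ h : ℝ → ℝ, ContinuousOn h (Set.Icc 0 1) → Integrable h μ := by
      intro h hc
      rw [hμ]
      exact (hc.integrableOn_Icc).mono_set Set.Ioc_subset_Icc_self
    set s : ℕ → ℝ := fun k => ((k:ℝ)+1)⁻¹ with hs
    set ψ : ℕ → ℝ → ℝ := fun k x => (|g x - s k * q.eval x| - |g x|) * ((k:ℝ)+1) with hψ
    have hcq : ∀ k, ContinuousOn (fun x => |g x - s k * q.eval x|) (Set.Icc (0:ℝ) 1) :=
      fun k => (hgc.sub ((continuous_const.mul (Polynomial.continuous q)).continuousOn)).abs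
    have hψint : ∀ k, Integrable (ψ k) μ := by
      intro k
      exact (((hInt _ (hcq k)).sub (hInt _ hgc.abs)).mul_const _)
    have hψnn : ∀ k, 0 ≤ ∫ x, ψ k x ∂μ := by
      intro k
      have heq : (∫ x, ψ k x ∂μ)
          = ((∫ x, |g x - s k * q.eval x| ∂μ) - ∫ x, |g x| ∂μ) * ((k:ℝ)+1) := by
        rw [hψ]
        rw [MeasureTheory.integral_mul_const]
        rw [MeasureTheory.integral_sub (hInt _ (hcq k)) (hInt _ hgc.abs)]
      rw [heq]
      apply mul_nonneg _ (by positivity)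
      have hE' : E ≤ ∫ x, |g x - s k * q.eval x| ∂μ := by
        rw [← h01]; exact hglb (s k) q hq
      have hgE' : (∫ x, |g x| ∂μ) = E := by rw [← h01]; exact hgE
      linarith
    have hae : ∀ᵐ x ∂μ, g x ≠ 0 := by
      rw [hμ, MeasureTheory.ae_iff, MeasureTheory.Measure.restrict_apply' measurableSet_Ioc]
      apply measure_mono_null _ hvolS₀
      intro x hx
      simp only [Set.mem_inter_iff, Set.mem_setOf_eq, not_not] at hx
      exact ⟨Set.Ioc_subset_Icc_self hx.2, hx.1⟩
    have hbound : ∀ k, ∀ᵐ x ∂μ, ‖ψ k x‖ ≤ |q.eval x| := by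
      intro k
      apply Filter.Eventually.of_forall
      intro x
      have hk1 : (0:ℝ) < (k:ℝ) + 1 := by positivity
      rw [hψ, Real.norm_eq_abs, abs_mul, abs_of_pos hk1]
      have h1 : |(|g x - s k * q.eval x| - |g x|)| ≤ |s k * q.eval x| := by
        have := abs_abs_sub_abs_le_abs_sub (g x - s k * q.eval x) (g x)
        simpa using this
      have h2 : |s k * q.eval x| = s k * |q.eval x| := by
        rw [abs_mul, abs_of_pos (by positivity : (0:ℝ) < s k)]
      calc |(|g x - s k * q.eval x| - |g x|)| * ((k:ℝ)+1)
          ≤ s k * |q.eval x| * ((k:ℝ)+1) := by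
            apply mul_le_mul_of_nonneg_right _ hk1.le
            rw [← h2]; exact h1
        _ = |q.eval x| * (s k * ((k:ℝ)+1)) := by ring
        _ = |q.eval x| := by
            rw [hs]
            field_simp
    have hslim : Filter.Tendsto s Filter.atTop (nhds 0) := by
      rw [hs]
      have := tendsto_one_div_add_atTop_nhds_zero_nat (𝕜 := ℝ)
      simpa [one_div] using this
    have hlim : ∀ᵐ x ∂μ, Filter.Tendsto (fun k => ψ k x) Filter.atTop
        (nhds (-(Real.sign (g x) * q.eval x))) := by
      filter_upwards [hae] with x hgx
      have h0 : 0 < |g x| := abs_pos.2 hgx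
      have hev : ∀ᶠ k in Filter.atTop, s k * (|q.eval x| + 1) < |g x| := by
        have hpos : (0:ℝ) < |g x| / (|q.eval x| + 1) :=
          div_pos h0 (by positivity)
        filter_upwards [hslim.eventually_lt_const hpos] with k hk
        have hq1 : (0:ℝ) < |q.eval x| + 1 := by positivity
        rw [lt_div_iff₀ hq1] at hk
        linarith
      apply Filter.Tendsto.congr' _ tendsto_const_nhds
      filter_upwards [hev] with k hk
      have hsk : (0:ℝ) < s k := by rw [hs]; positivity
      have hk1 : ((k:ℝ)+1) ≠ 0 := by positivity
      have hsk1 : s k * ((k:ℝ)+1) = 1 := by rw [hs]; field_simp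
      have habs2 : |s k * q.eval x| < |g x| := by
        rw [abs_mul, abs_of_pos hsk]
        nlinarith [abs_nonneg (q.eval x)]
      rcases lt_or_gt_of_ne hgx with hneg | hpos
      · have hval : |g x| = -(g x) := abs_of_neg hneg
        have h1 : g x - s k * q.eval x < 0 := by
          have h2 := le_abs_self (s k * q.eval x)
          have h3 := neg_abs_le (s k * q.eval x)
          linarith
        rw [Real.sign_of_neg hneg]
        show -(-1 * q.eval x) = (|g x - s k * q.eval x| - |g x|) * ((k:ℝ)+1)
        rw [abs_of_neg h1, hval]
        have hr : (-(g x - s k * q.eval x) - -g x) * ((k:ℝ)+1)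
            = q.eval x * (s k * ((k:ℝ)+1)) := by ring
        rw [hr, hsk1]
        ring
      · have hval : |g x| = g x := abs_of_pos hpos
        have h1 : 0 < g x - s k * q.eval x := by
          have h2 := le_abs_self (s k * q.eval x)
          have h3 := neg_abs_le (s k * q.eval x)
          linarith
        rw [Real.sign_of_pos hpos]
        show -(1 * q.eval x) = (|g x - s k * q.eval x| - |g x|) * ((k:ℝ)+1)
        rw [abs_of_pos h1, hval]
        have hr : (g x - s k * q.eval x - g x) * ((k:ℝ)+1)
            = -(q.eval x * (s k * ((k:ℝ)+1))) := by ring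
        rw [hr, hsk1]
        ring
    have hqic : ContinuousOn (fun x => |q.eval x|) (Set.Icc (0:ℝ) 1) :=
      (Polynomial.continuous q).continuousOn.abs
    have hDCT := MeasureTheory.tendsto_integral_of_dominated_convergence
      (F := ψ) (f := fun x => -(Real.sign (g x) * q.eval x)) (bound := fun x => |q.eval x|)
      (fun k => (hψint k).aestronglyMeasurable) (hInt _ hqic) hbound hlim
    have hlimnn : 0 ≤ ∫ x, -(Real.sign (g x) * q.eval x) ∂μ :=
      ge_of_tendsto' hDCT hψnn
    rw [MeasureTheory.integral_neg] at hlimnn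
    linarith
  have hort0 : ∀ q : Polynomial ℝ, q.natDegree ≤ n →
      (∫ x in Set.Ioc (0:ℝ) 1, Real.sign (g x) * q.eval x) = 0 := by
    intro q hq
    refine le_antisymm (hort q hq) ?_
    have h2 := hort (-q) (by rwa [Polynomial.natDegree_neg])
    have h3 : (∫ x in Set.Ioc (0:ℝ) 1, Real.sign (g x) * (-q).eval x)
        = -∫ x in Set.Ioc (0:ℝ) 1, Real.sign (g x) * q.eval x := by
      rw [← MeasureTheory.integral_neg]
      apply MeasureTheory.integral_congr_ae
      apply Filter.Eventually.of_forall
      intro x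
      simp [mul_neg]
    rw [h3] at h2
    linarith
  -- construct the sign polynomial
  obtain ⟨q₀, hq₀deg, hq₀pos, -⟩ := lem_signpoly T.card T 0 1 g le_rfl one_pos hgc
    (fun x hx _ => (hS₀fin.mem_toFinset.1 hx).2)
    (fun x hx h0 => hS₀fin.mem_toFinset.2 ⟨Set.Ioo_subset_Icc_self hx, h0⟩)
  have hq₀n : q₀.natDegree ≤ n := hq₀deg.trans hTcard
  obtain ⟨x₀, hx₀Ioo, hgx₀⟩ : ∃ x ∈ Set.Ioo (0:ℝ) 1, g x ≠ 0 := by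
    have hinf : (Set.Ioo (0:ℝ) 1).Infinite := Set.Ioo_infinite (by norm_num)
    obtain ⟨x, hx⟩ := (hinf.diff hS₀fin).nonempty
    exact ⟨x, hx.1, fun h0 => hx.2 ⟨Set.Ioo_subset_Icc_self hx.1, h0⟩⟩
  have hq₀x : q₀.eval x₀ ≠ 0 := by
    have hp := hq₀pos x₀ hx₀Ioo hgx₀
    intro h0
    rw [h0, mul_zero] at hp
    exact lt_irrefl 0 hp
  have hIq : 0 < ∫ x in (0:ℝ)..1, |q₀.eval x| := by
    have hnn : 0 ≤ ∫ x in (0:ℝ)..1, |q₀.eval x| :=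
      intervalIntegral.integral_nonneg zero_le_one (fun x _ => abs_nonneg _)
    rcases eq_or_lt_of_le hnn with heq | h
    · exfalso
      have := L0 ((Polynomial.continuous q₀).continuousOn.abs)
        (fun x _ => abs_nonneg _) heq.symm
      exact hq₀x (abs_eq_zero.1 (this x₀ (Set.Ioo_subset_Icc_self hx₀Ioo)))
    · exact h
  have hcongr : (∫ x in Set.Ioc (0:ℝ) 1, Real.sign (g x) * q₀.eval x)
      = ∫ x in Set.Ioc (0:ℝ) 1, |q₀.eval x| := by
    apply MeasureTheory.integral_congr_ae
    rw [Filter.EventuallyEq, MeasureTheory.ae_iff,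
      MeasureTheory.Measure.restrict_apply' measurableSet_Ioc]
    apply measure_mono_null _ (measure_union_null hvolS₀ (measure_singleton (1:ℝ)))
    intro x hx
    simp only [Set.mem_inter_iff, Set.mem_setOf_eq] at hx
    obtain ⟨hneq, hxI⟩ := hx
    by_cases hx1 : x = 1
    · exact Or.inr (by simp [hx1])
    · have hxIoo : x ∈ Set.Ioo (0:ℝ) 1 := ⟨hxI.1, lt_of_le_of_ne hxI.2 hx1⟩
      left
      refine ⟨Set.Ioo_subset_Icc_self hxIoo, ?_⟩
      by_contra hgx
      apply hneq
      have hp := hq₀pos x hxIoo hgx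
      rcases lt_or_gt_of_ne hgx with hn | hp'
      · have hq : q₀.eval x < 0 := by nlinarith
        rw [Real.sign_of_neg hn, abs_of_neg hq]
        ring
      · have hq : 0 < q₀.eval x := by nlinarith
        rw [Real.sign_of_pos hp', abs_of_pos hq]
        ring
  have h1 := hort0 q₀ hq₀n
  rw [hcongr] at h1
  rw [intervalIntegral.integral_of_le zero_le_one] at hIq
  linarith
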